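/- Let G be a 3-regular finite simple graph with vertex set {v_1,…,v_n} and edge set {e_1,…,e_m}, and for each vertex v let a_v ∈ {0,1}^m be its edge-incidence vector, i.e., a_v[j] = 1 iff v is an endpoint of e_j. Let k ∈ ℕ and let M = {a_v : v ∈ V(G)}. Then G has a dominating set of size at most k if and only if there exists a subset S ⊆ M with |S| ≤ k such that every vector a_v ∈ M is within Hamming distance 4 of some vector in S. (This is the correctness of the reduction from Dominating Set on 3-regular graphs to In-Clustering with r = 4.) -/
import Mathlib

open Finset

theorem statement_19 {n m : ℕ} (G : SimpleGraph (Fin n)) [DecidableRel G.Adj]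
    (hreg : ∀ v, G.degree v = 3)
    (e : Fin m ≃ G.edgeSet)
    (a : Fin n → Fin m → Bool)
    (ha : ∀ v j, a v j = true ↔ v ∈ (e j).1)
    (k : ℕ) :
    (∃ D : Finset (Fin n), D.card ≤ k ∧ ∀ v, ∃ u ∈ D, u = v ∨ G.Adj u v) ↔
    (∃ S : Finset (Fin m → Bool), S ⊆ Finset.image a Finset.univ ∧ S.card ≤ k ∧
      ∀ v : Fin n, ∃ w ∈ S, hammingDist w (a v) ≤ 4) := by
  classical
  set A : Fin n → Finset (Fin m) := fun v => univ.filter (fun j => a v j = true) with hA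
  have hcard : ∀ v, (A v).card = 3 := by
    intro v
    rw [← hreg v, ← G.card_incidenceFinset_eq_degree]
    apply Finset.card_bij (fun j _ => ((e j : G.edgeSet) : Sym2 (Fin n)))
    · intro j hj
      simp only [hA, mem_filter, mem_univ, true_and] at hj
      rw [SimpleGraph.mem_incidenceFinset]
      exact ⟨(e j).2, (ha v j).mp hj⟩
    · intro j1 _ j2 _ hval
      exact e.injective (Subtype.ext hval)
    · intro s hs
      rw [SimpleGraph.mem_incidenceFinset] at hs
      refine ⟨e.symm ⟨s, hs.1⟩, ?_, ?_⟩
      · simp only [hA, mem_filter, mem_univ, true_and, ha, Equiv.apply_symm_apply]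
        exact hs.2
      · simp
  have hdist : ∀ u v, hammingDist (a u) (a v) + 2 * (A u ∩ A v).card = 6 := by
    intro u v
    have hfil : ({j | a u j ≠ a v j} : Finset (Fin m)) = (A u \ A v) ∪ (A v \ A u) := by
      ext j
      simp only [hA, mem_filter, mem_univ, true_and, mem_union, mem_sdiff]
      cases hu : a u j <;> cases hv : a v j <;> simp
    have hdisj : Disjoint (A u \ A v) (A v \ A u) :=
      disjoint_sdiff_sdiff
    have h1 : (A u \ A v).card + (A u ∩ A v).card = (A u).card :=
      card_sdiff_add_card_inter _ _
    have h2 : (A v \ A u).card + (A v ∩ A u).card = (A v).card :=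
      card_sdiff_add_card_inter _ _
    rw [inter_comm] at h2
    have : hammingDist (a u) (a v) = (A u \ A v).card + (A v \ A u).card := by
      rw [hammingDist, hfil, card_union_of_disjoint hdisj]
    rw [this]
    have h3 := hcard u
    have h4 := hcard v
    omega
  have hmem : ∀ u v (h : G.Adj u v), (A u ∩ A v).Nonempty := by
    intro u v h
    refine ⟨e.symm ⟨s(u, v), G.mem_edgeSet.mpr h⟩, ?_⟩
    simp only [hA, mem_inter, mem_filter, mem_univ, true_and, ha, Equiv.apply_symm_apply]
    exact ⟨Sym2.mem_mk_left u v, Sym2.mem_mk_right u v⟩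
  have hkey : ∀ u v, hammingDist (a u) (a v) ≤ 4 → u = v ∨ G.Adj u v := by
    intro u v hle
    by_cases huv : u = v
    · exact Or.inl huv
    right
    have hd := hdist u v
    have hne : (A u ∩ A v).Nonempty := by
      rw [← card_pos]
      omega
    obtain ⟨j, hj⟩ := hne
    simp only [hA, mem_inter, mem_filter, mem_univ, true_and, ha] at hj
    have : (e j : Sym2 (Fin n)) = s(u, v) := (Sym2.mem_and_mem_iff huv).mp hj
    have := (e j).2
    rw [‹(e j : Sym2 (Fin n)) = s(u, v)›] at this
    exact G.mem_edgeSet.mp this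
  constructor
  · rintro ⟨D, hDcard, hDdom⟩
    refine ⟨D.image a, image_subset_image (subset_univ D), le_trans (card_image_le) hDcard, ?_⟩
    intro v
    obtain ⟨u, huD, hu⟩ := hDdom v
    refine ⟨a u, mem_image_of_mem a huD, ?_⟩
    rcases hu with rfl | hadj
    · simp [hammingDist_self]
    · have hd := hdist u v
      obtain ⟨j, hj⟩ := hmem u v hadj
      have : 0 < (A u ∩ A v).card := card_pos.mpr ⟨j, hj⟩
      omega
  · rintro ⟨S, hSsub, hScard, hSdom⟩
    have hpre : ∀ w : {x // x ∈ S}, ∃ u : Fin n, a u = w.1 := by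
      intro w
      have := hSsub w.2
      simpa using this
    choose g hg using hpre
    refine ⟨S.attach.image g, ?_, ?_⟩
    · calc (S.attach.image g).card ≤ S.attach.card := card_image_le
        _ = S.card := card_attach
        _ ≤ k := hScard
    · intro v
      obtain ⟨w, hw, hd⟩ := hSdom v
      refine ⟨g ⟨w, hw⟩, mem_image_of_mem g (mem_attach _ _), ?_⟩
      apply hkey
      rw [hg ⟨w, hw⟩]
      exact hd
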